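/- Let $A$ be a UFD over a field $k$ of characteristic $0$, and let $\mathfrak{g}$ be a Lie algebra acting on $A$ by derivations. Then the monoid of nonzero elements $a \in A$ such that $Aa$ is $\mathfrak{g}$-stable, taken modulo units, is a free commutative monoid whose irreducible elements are (the classes of) the irreducible elements $a$ of $A$ such that $Aa$ is $\mathfrak{g}$-stable. -/

import Mathlib

lemma key_deriv_dvd {k A : Type*} [Field k] [CharZero k] [CommRing A] [IsDomain A]
    [Algebra k A] [UniqueFactorizationMonoid A] (D : Derivation k A A) {a p : A} (ha : a ≠ 0)
    (hp : Prime p) (hpa : p ∣ a) (h : a ∣ D a) : p ∣ D p := by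
  obtain ⟨n, c, hc, rfl⟩ := WfDvdMonoid.max_power_factor ha hp.irreducible
  have hn : n ≠ 0 := by
    rintro rfl
    simp only [pow_zero, one_mul] at hpa
    exact hc hpa
  have hD : D (p ^ n * c) = ((n : A) * D p * c) * p ^ (n - 1) + p ^ n * D c := by
    rw [Derivation.leibniz, Derivation.leibniz_pow]
    simp only [smul_eq_mul, nsmul_eq_mul, smul_smul]
    ring
  have h1 : p ^ (n - 1) * p ∣ ((n : A) * D p * c) * p ^ (n - 1) := by
    rw [← pow_succ, Nat.sub_add_cancel (Nat.one_le_iff_ne_zero.2 hn)]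
    have h2 : p ^ n ∣ D (p ^ n * c) := dvd_trans (Dvd.intro c rfl) h
    rw [hD] at h2
    exact (dvd_add_left (Dvd.intro _ rfl)).mp h2
  rw [mul_comm ((n : A) * D p * c)] at h1
  have h3 : p ∣ (n : A) * D p * c :=
    (mul_dvd_mul_iff_left (pow_ne_zero _ hp.ne_zero)).mp h1
  have hnu : IsUnit (n : A) := by
    rw [← map_natCast (algebraMap k A) n]
    exact (IsUnit.mk0 (n : k) (Nat.cast_ne_zero.2 hn)).map (algebraMap k A)
  rcases hp.dvd_or_dvd h3 with h4 | h4
  · rcases hp.dvd_or_dvd h4 with h5 | h5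
    · exact absurd (isUnit_of_dvd_unit h5 hnu) hp.not_unit
    · exact h5
  · exact absurd h4 hc


/-- The monoid of nonzero elements `a` with `Aa` stable under the Lie algebra action,
modulo units, is free commutative on the stable irreducible elements: every such
element factors as a unit times a product of stable irreducibles, uniquely up to
order and associates. -/
theorem stmt_8 {k A : Type*} [Field k] [CharZero k] [CommRing A] [IsDomain A]
    [Algebra k A] [UniqueFactorizationMonoid A]
    {L : Type*} [LieRing L] [LieAlgebra k L]
    (φ : L →ₗ⁅k⁆ Derivation k A A) :
    (∀ a : A, a ≠ 0 → (∀ x : L, φ x a ∈ Ideal.span {a}) →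
      ∃ (u : Aˣ) (f : Multiset A),
        (∀ b ∈ f, Irreducible b ∧ ∀ x : L, φ x b ∈ Ideal.span {b}) ∧
        a = (u : A) * f.prod) ∧
    (∀ (u v : Aˣ) (f g : Multiset A),
      (∀ b ∈ f, Irreducible b ∧ ∀ x : L, φ x b ∈ Ideal.span {b}) →
      (∀ b ∈ g, Irreducible b ∧ ∀ x : L, φ x b ∈ Ideal.span {b}) →
      (u : A) * f.prod = (v : A) * g.prod → Multiset.Rel Associated f g) := by
  constructor
  · intro a ha hstab
    obtain ⟨f, hf, ⟨u, hu⟩⟩ := WfDvdMonoid.exists_factors a ha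
    refine ⟨u, f, fun b hb => ⟨hf b hb, fun x => ?_⟩, by rw [← hu]; ring⟩
    rw [Ideal.mem_span_singleton]
    have hba : b ∣ a := hu ▸ Dvd.dvd.mul_right (Multiset.dvd_prod hb) u
    exact key_deriv_dvd (φ x) ha
      (UniqueFactorizationMonoid.irreducible_iff_prime.mp (hf b hb)) hba
      (Ideal.mem_span_singleton.mp (hstab x))
  · intro u v f g hf hg heq
    refine UniqueFactorizationMonoid.factors_unique (fun b hb => (hf b hb).1)
      (fun b hb => (hg b hb).1) ⟨u * v⁻¹, ?_⟩
    rw [Units.val_mul, ← mul_assoc, Units.mul_inv_eq_iff_eq_mul]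
    rw [mul_comm f.prod, mul_comm g.prod, heq]
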